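/- The entropy decrease of a split satisfies Δ := H(p̄) - sum_j w_j H(p^j) ≥ (M^2/8) * J^2, where J = (2/M) * sum_j sum_i q_i |p_j - p_{j|i}| and the split is perfectly balanced (each p_j = 1/M), with weights w_j = p_j. -/

import Mathlib

lemma log_pade {t : ℝ} (ht : 0 < t) :
    (t - 1) * (5 * t + 1) / (2 * t * (t + 2)) ≤ Real.log t := by
  set ψ : ℝ → ℝ := fun s => Real.log s - (s - 1) * (5 * s + 1) / (2 * s * (s + 2)) with hψdef
  have hψ : ∀ s : ℝ, 0 < s → HasDerivAt ψ (4 * (s - 1) ^ 3 / (2 * s * (s + 2)) ^ 2) s := by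
    intro s hs
    have hs0 : s ≠ 0 := hs.ne'
    have hD : (2 : ℝ) * s * (s + 2) ≠ 0 := by positivity
    have h1 : HasDerivAt (fun u : ℝ => (u - 1) * (5 * u + 1)) (10 * s - 4) s := by
      have := (((hasDerivAt_id s).sub_const 1).mul
        (((hasDerivAt_id s).const_mul 5).add_const 1))
      convert this using 1; rfl; rfl; rfl; simp [id]; ring
    have h2 : HasDerivAt (fun u : ℝ => 2 * u * (u + 2)) (4 * s + 4) s := by
      have := (((hasDerivAt_id s).const_mul 2).mul ((hasDerivAt_id s).add_const 2))
      convert this using 1; rfl; rfl; rfl; simp [id]; ring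
    have h3 := h1.div h2 hD
    have h4 := (Real.hasDerivAt_log hs0).sub h3
    convert h4 using 1; rfl; rfl; rfl
    field_simp
    ring
  have hψ1 : ψ 1 = 0 := by simp [hψdef]
  have key : 0 ≤ ψ t := by
    rcases le_total 1 t with h | h
    · have hmono : MonotoneOn ψ (Set.Icc 1 t) := by
        apply monotoneOn_of_deriv_nonneg (convex_Icc 1 t)
        · intro x hx
          exact (hψ x (lt_of_lt_of_le one_pos hx.1)).differentiableAt.continuousAt.continuousWithinAt
        · intro x hx
          rw [interior_Icc] at hx
          exact (hψ x (lt_trans one_pos hx.1)).differentiableAt.differentiableWithinAt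
        · intro x hx
          rw [interior_Icc] at hx
          rw [(hψ x (lt_trans one_pos hx.1)).deriv]
          apply div_nonneg _ (by positivity)
          have hx1 : (0:ℝ) ≤ x - 1 := by linarith [hx.1]
          positivity
      have := hmono (Set.left_mem_Icc.2 h) (Set.right_mem_Icc.2 h) h
      rw [hψ1] at this
      exact this
    · have hanti : AntitoneOn ψ (Set.Icc t 1) := by
        apply antitoneOn_of_deriv_nonpos (convex_Icc t 1)
        · intro x hx
          exact (hψ x (lt_of_lt_of_le ht hx.1)).differentiableAt.continuousAt.continuousWithinAt
        · intro x hx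
          rw [interior_Icc] at hx
          exact (hψ x (lt_of_lt_of_le ht hx.1.le)).differentiableAt.differentiableWithinAt
        · intro x hx
          rw [interior_Icc] at hx
          rw [(hψ x (lt_trans ht hx.1)).deriv]
          apply div_nonpos_of_nonpos_of_nonneg _ (by positivity)
          have hx1 : x - 1 ≤ 0 := by linarith [hx.2]
          nlinarith [Odd.pow_nonpos (by decide : Odd 3) hx1]
      have := hanti (Set.left_mem_Icc.2 h) (Set.right_mem_Icc.2 h) h
      rw [hψ1] at this
      exact this
  have key' : 0 ≤ Real.log t - (t - 1) * (5 * t + 1) / (2 * t * (t + 2)) := key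
  linarith [key']

lemma kl_pointwise {x : ℝ} {y : ℝ} (hx : 0 ≤ x) (hy : 0 ≤ y) (h0 : y = 0 → x = 0) :
    3 * (x - y) ^ 2 ≤ 2 * (x + 2 * y) * (x * Real.log (x / y) - x + y) := by
  rcases eq_or_lt_of_le hy with hy0 | hy0
  · have hx0 : x = 0 := h0 hy0.symm
    simp [hx0, ← hy0]
  rcases eq_or_lt_of_le hx with hx0 | hx0
  · rw [← hx0]
    simp only [zero_mul, zero_sub, zero_add, sub_zero]
    nlinarith [hy0]
  · have ht : 0 < x / y := by positivity
    have hR := log_pade ht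
    have hxy : x / y * y = x := div_mul_cancel₀ x hy0.ne'
    set R := (x / y - 1) * (5 * (x / y) + 1) / (2 * (x / y) * (x / y + 2)) with hRdef
    have hEq : 2 * (x + 2 * y) * (x * R - x + y) = 3 * (x - y) ^ 2 := by
      rw [hRdef]
      field_simp
      ring
    have h1 : x * R ≤ x * Real.log (x / y) := mul_le_mul_of_nonneg_left hR hx
    nlinarith [mul_le_mul_of_nonneg_left (by linarith : x * R - x + y ≤ x * Real.log (x/y) - x + y)
      (by linarith : (0:ℝ) ≤ 2 * (x + 2 * y))]

/-- For a perfectly balanced split (each `p_j = 1/M`, used as weights),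
the entropy decrease satisfies `Δ := H(p̄) - ∑ j, p_j H(p^j) ≥ (M²/8) J²`, where
`p^j_i = q_i p_{j|i} / p_j`, `p̄ = ∑ j p_j p^j = q`, and
`J = (2/M) ∑ j ∑ i, q_i |p_j - p_{j|i}|`. `H` is the natural-log Shannon entropy. -/
theorem stmt8 (M K : ℕ) (hM : 2 ≤ M) (hK : 2 ≤ K)
    (q : Fin K → ℝ) (hq : ∀ i, 0 ≤ q i) (hq1 : ∑ i, q i = 1)
    (p : Fin K → Fin M → ℝ) (hp : ∀ i j, 0 ≤ p i j) (hp1 : ∀ i, ∑ j, p i j = 1)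
    (pj : Fin M → ℝ) (hpj : ∀ j, pj j = ∑ i, q i * p i j)
    (hbal : ∀ j, pj j = 1 / M)
    (pc : Fin M → Fin K → ℝ) (hpc : ∀ j i, pc j i = q i * p i j / pj j)
    (H : (Fin K → ℝ) → ℝ)
    (hH : ∀ v, H v = ∑ i, v i * Real.log (1 / v i))
    (J : ℝ) (hJ : J = (2 / M) * ∑ j, ∑ i, q i * |pj j - p i j|) :
    (M ^ 2 / 8) * J ^ 2 ≤ H q - ∑ j, pj j * H (pc j) := by
  have hM0 : (0:ℝ) < M := by
    have : (2:ℝ) ≤ M := by exact_mod_cast hM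
    linarith
  have hpj0 : ∀ j, 0 < pj j := by intro j; rw [hbal]; positivity
  have hpc0 : ∀ j i, 0 ≤ pc j i := fun j i => by
    rw [hpc]; exact div_nonneg (mul_nonneg (hq i) (hp i j)) (hpj0 j).le
  have hqz : ∀ j i, q i = 0 → pc j i = 0 := fun j i h => by rw [hpc, h]; simp
  have hqp : ∀ j i, q i * p i j = pc j i * pj j := fun j i => by
    rw [hpc, div_mul_cancel₀ _ (hpj0 j).ne']
  have hpcsum : ∀ j, ∑ i, pc j i = 1 := by
    intro j
    have : ∑ i, pc j i = (∑ i, q i * p i j) / pj j := by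
      rw [Finset.sum_div]; exact Finset.sum_congr rfl fun i _ => by rw [hpc]
    rw [this, ← hpj, div_self (hpj0 j).ne']
  have hmix : ∀ i, ∑ j, pj j * pc j i = q i := by
    intro i
    have e : ∀ j : Fin M, pj j * pc j i = q i * p i j := fun j => by
      rw [hqp j i, mul_comm]
    rw [Finset.sum_congr rfl fun j _ => e j, ← Finset.mul_sum, hp1, mul_one]
  set D : Fin M → ℝ := fun j => ∑ i, |pc j i - q i| with hDdef
  have hD0 : ∀ j, 0 ≤ D j := fun j => Finset.sum_nonneg fun i _ => abs_nonneg _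
  -- per-child Pinsker bound
  have hKL : ∀ j, D j ^ 2 / 2 ≤ ∑ i, pc j i * Real.log (pc j i / q i) := by
    intro j
    set w : Fin K → ℝ := fun i => pc j i + 2 * q i with hwdef
    set d : Fin K → ℝ := fun i => pc j i - q i with hddef
    have hw0 : ∀ i, 0 ≤ w i := fun i => by
      have := hpc0 j i; have := hq i; simp only [hwdef]; linarith
    have hwz : ∀ i, w i = 0 → pc j i = 0 ∧ q i = 0 := by
      intro i h
      have h1 := hpc0 j i; have h2 := hq i
      constructor <;> [skip; skip] <;> simp only [hwdef] at h <;> linarith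
    have hsumw : ∑ i, w i = 3 := by
      simp only [hwdef]
      rw [Finset.sum_add_distrib, hpcsum, ← Finset.mul_sum, hq1]; norm_num
    have hterm : ∀ i, 3 / 2 * (d i ^ 2 / w i) ≤
        pc j i * Real.log (pc j i / q i) - pc j i + q i := by
      intro i
      rcases eq_or_lt_of_le (hw0 i) with hwe | hwe
      · obtain ⟨h1, h2⟩ := hwz i hwe.symm
        simp [hddef, h1, h2]
      · have h2 := kl_pointwise (hpc0 j i) (hq i) (hqz j i)
        have e : 3 / 2 * (d i ^ 2 / w i) = 3 * d i ^ 2 / (2 * w i) := by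
          field_simp
        rw [e, div_le_iff₀ (by positivity)]
        have : 2 * (pc j i + 2 * q i) = 2 * w i := by rw [hwdef]
        nlinarith [h2]
    have hsum1 : ∑ i, (pc j i * Real.log (pc j i / q i) - pc j i + q i)
        = ∑ i, pc j i * Real.log (pc j i / q i) := by
      rw [Finset.sum_add_distrib, Finset.sum_sub_distrib, hpcsum, hq1]; ring
    have hEngel : D j ^ 2 ≤ 3 * ∑ i, d i ^ 2 / w i := by
      set s := Finset.univ.filter (fun i => 0 < w i) with hsdef
      have hDs : D j = ∑ i ∈ s, |d i| := by
        rw [hDdef]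
        refine (Finset.sum_subset (Finset.filter_subset _ _) ?_).symm
        intro i _ hi
        have : ¬ 0 < w i := by simpa [hsdef] using hi
        have hwe : w i = 0 := le_antisymm (not_lt.mp this) (hw0 i)
        obtain ⟨h1, h2⟩ := hwz i hwe
        simp [hddef, h1, h2]
      have hsub : ∑ i ∈ s, w i ≤ 3 := by
        rw [← hsumw]
        exact Finset.sum_le_sum_of_subset_of_nonneg (Finset.filter_subset _ _)
          (fun i _ _ => hw0 i)
      have hCS := Finset.sq_sum_div_le_sum_sq_div s (fun i => |d i|)
        (g := w) (fun i hi => by simpa [hsdef] using hi)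
      have hnn : 0 ≤ ∑ i ∈ s, d i ^ 2 / w i :=
        Finset.sum_nonneg fun i hi => div_nonneg (sq_nonneg _) (hw0 i)
      have habs : ∑ i ∈ s, |d i| ^ 2 / w i = ∑ i ∈ s, d i ^ 2 / w i :=
        Finset.sum_congr rfl fun i _ => by rw [sq_abs]
      rcases eq_or_lt_of_le (Finset.sum_nonneg (fun i (_ : i ∈ s) => hw0 i)) with hsw | hsw
      · -- sum of w over s is 0, so s is empty (each w positive on s), D j = 0
        have hse : ∀ i ∈ s, w i = 0 := by
          intro i hi
          exact le_antisymm (by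
            by_contra hcon
            push_neg at hcon
            have : 0 < ∑ i ∈ s, w i := Finset.sum_pos' (fun k _ => hw0 k) ⟨i, hi, hcon⟩
            linarith [hsw, this]) (hw0 i)
        have : D j = 0 := by
          rw [hDs]
          refine Finset.sum_eq_zero fun i hi => ?_
          have hwp : 0 < w i := by simpa [hsdef] using hi
          linarith [hse i hi]
        rw [this]
        have : 0 ≤ ∑ i, d i ^ 2 / w i :=
          Finset.sum_nonneg fun i _ => div_nonneg (sq_nonneg _) (hw0 i)
        nlinarith
      · have h5 : (∑ i ∈ s, |d i|) ^ 2 ≤ (∑ i ∈ s, d i ^ 2 / w i) * ∑ i ∈ s, w i := by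
          rw [← habs]
          calc (∑ i ∈ s, |d i|) ^ 2
              = (∑ i ∈ s, |d i|) ^ 2 / (∑ i ∈ s, w i) * (∑ i ∈ s, w i) := by
                field_simp
            _ ≤ (∑ i ∈ s, |d i| ^ 2 / w i) * ∑ i ∈ s, w i := by
                exact mul_le_mul_of_nonneg_right hCS hsw.le
        have h6 : ∑ i ∈ s, d i ^ 2 / w i ≤ ∑ i, d i ^ 2 / w i :=
          Finset.sum_le_sum_of_subset_of_nonneg (Finset.filter_subset _ _)
            (fun i _ _ => div_nonneg (sq_nonneg _) (hw0 i))
        calc D j ^ 2 = (∑ i ∈ s, |d i|) ^ 2 := by rw [hDs]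
          _ ≤ (∑ i ∈ s, d i ^ 2 / w i) * ∑ i ∈ s, w i := h5
          _ ≤ (∑ i, d i ^ 2 / w i) * 3 := by
              apply mul_le_mul h6 hsub (Finset.sum_nonneg (fun i (_ : i ∈ s) => hw0 i))
              exact Finset.sum_nonneg fun i _ => div_nonneg (sq_nonneg _) (hw0 i)
          _ = 3 * ∑ i, d i ^ 2 / w i := by ring
    calc D j ^ 2 / 2 ≤ 3 / 2 * ∑ i, d i ^ 2 / w i := by linarith [hEngel]
      _ = ∑ i, 3 / 2 * (d i ^ 2 / w i) := by rw [Finset.mul_sum]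
      _ ≤ ∑ i, (pc j i * Real.log (pc j i / q i) - pc j i + q i) :=
          Finset.sum_le_sum fun i _ => hterm i
      _ = ∑ i, pc j i * Real.log (pc j i / q i) := hsum1
  -- entropy decrease identity
  have hdelta : H q - ∑ j, pj j * H (pc j)
      = ∑ j, pj j * ∑ i, pc j i * Real.log (pc j i / q i) := by
    have e1 : H q = ∑ j, ∑ i, pj j * (pc j i * Real.log (1 / q i)) := by
      rw [hH]
      calc ∑ i, q i * Real.log (1 / q i)
          = ∑ i, ∑ j, pj j * (pc j i * Real.log (1 / q i)) := by
            refine Finset.sum_congr rfl fun i _ => ?_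
            simp only [← mul_assoc]
            rw [← Finset.sum_mul, hmix i]
        _ = ∑ j, ∑ i, pj j * (pc j i * Real.log (1 / q i)) := Finset.sum_comm
    have e2 : ∑ j, pj j * H (pc j)
        = ∑ j, ∑ i, pj j * (pc j i * Real.log (1 / pc j i)) := by
      refine Finset.sum_congr rfl fun j _ => ?_
      rw [hH, Finset.mul_sum]
    have e3 : ∀ j i, pj j * (pc j i * Real.log (1 / q i))
        - pj j * (pc j i * Real.log (1 / pc j i))
        = pj j * (pc j i * Real.log (pc j i / q i)) := by
      intro j i
      rcases eq_or_lt_of_le (hpc0 j i) with hpce | hpce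
      · rw [← hpce]; ring
      · have hqi : 0 < q i := by
          rcases eq_or_lt_of_le (hq i) with h | h
          · exact absurd (hqz j i h.symm) (by linarith)
          · exact h
        rw [one_div, one_div, Real.log_inv, Real.log_inv,
          Real.log_div hpce.ne' hqi.ne']
        ring
    rw [e1, e2, ← Finset.sum_sub_distrib]
    refine Finset.sum_congr rfl fun j _ => ?_
    rw [← Finset.sum_sub_distrib, Finset.mul_sum]
    exact Finset.sum_congr rfl fun i _ => e3 j i
  -- J in terms of D
  have hJ2 : J = 2 / (M:ℝ) ^ 2 * ∑ j, D j := by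
    rw [hJ]
    have e : ∀ j : Fin M, ∑ i, q i * |pj j - p i j| = 1 / M * D j := by
      intro j
      rw [hDdef, Finset.mul_sum]
      refine Finset.sum_congr rfl fun i _ => ?_
      have : q i * |pj j - p i j| = |q i * pj j - q i * p i j| := by
        rw [← abs_of_nonneg (hq i), ← abs_mul, mul_sub, abs_of_nonneg (hq i)]
      rw [this, hqp j i, hbal j]
      rw [show q i * (1 / M) - pc j i * (1 / M) = (1 / (M:ℝ)) * (q i - pc j i) by ring,
        abs_mul, abs_of_nonneg (by positivity : (0:ℝ) ≤ 1 / (M:ℝ)), abs_sub_comm]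
    rw [Finset.sum_congr rfl fun j _ => e j, ← Finset.mul_sum]
    ring
  -- assemble
  rw [hdelta]
  have step1 : ∑ j, pj j * (D j ^ 2 / 2)
      ≤ ∑ j, pj j * ∑ i, pc j i * Real.log (pc j i / q i) :=
    Finset.sum_le_sum fun j _ => mul_le_mul_of_nonneg_left (hKL j) (hpj0 j).le
  have step2 : ∑ j, pj j * (D j ^ 2 / 2) = 1 / (2 * M) * ∑ j, D j ^ 2 := by
    rw [Finset.mul_sum]
    refine Finset.sum_congr rfl fun j _ => ?_
    rw [hbal j]; ring
  have hT : (∑ j, D j) ^ 2 ≤ M * ∑ j, D j ^ 2 := by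
    have := sq_sum_le_card_mul_sum_sq (s := (Finset.univ : Finset (Fin M))) (f := D)
    simpa using this
  have hfin : (M:ℝ) ^ 2 / 8 * J ^ 2 ≤ 1 / (2 * M) * ∑ j, D j ^ 2 := by
    rw [hJ2]
    have e : (M:ℝ) ^ 2 / 8 * (2 / (M:ℝ) ^ 2 * ∑ j, D j) ^ 2
        = 1 / (2 * (M:ℝ) ^ 2) * (∑ j, D j) ^ 2 := by
      field_simp; ring
    rw [e]
    calc 1 / (2 * (M:ℝ) ^ 2) * (∑ j, D j) ^ 2
        ≤ 1 / (2 * (M:ℝ) ^ 2) * (M * ∑ j, D j ^ 2) :=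
          mul_le_mul_of_nonneg_left hT (by positivity)
      _ = 1 / (2 * M) * ∑ j, D j ^ 2 := by field_simp
  linarith [hfin, step1, step2]
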